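/- For every positive integer n, the inequality √(2π) · n^{n+1/2} · e^{-n} · e^{1/(12n+1)} < n! < √(2π) · n^{n+1/2} · e^{-n} · e^{1/(12n)} holds. -/

import Mathlib

open Real Filter Topology Nat

-- lower bound: log((1+t)/(1-t)) > 2t + 2t^3/3 on (0,1)
lemma log_lb {t : ℝ} (ht : t ∈ Set.Ioo (0:ℝ) 1) :
    2*t + 2*t^3/3 < Real.log (1+t) - Real.log (1-t) := by
  obtain ⟨ht0, ht1⟩ := ht
  set g : ℝ → ℝ := fun t => Real.log (1+t) - Real.log (1-t) - 2*t - 2*t^3/3 with hg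
  have key : StrictMonoOn g (Set.Ico (0:ℝ) 1) := by
    apply strictMonoOn_of_deriv_pos (convex_Ico 0 1)
    · apply ContinuousOn.sub
      apply ContinuousOn.sub
      apply ContinuousOn.sub
      · exact (Real.continuousOn_log.comp (by fun_prop) (by
          intro x hx; simp only [Set.mem_Ico] at hx
          simp only [Set.mem_compl_iff, Set.mem_singleton_iff]; nlinarith [hx.1]))
      · exact (Real.continuousOn_log.comp (by fun_prop) (by
          intro x hx; simp only [Set.mem_Ico] at hx
          simp only [Set.mem_compl_iff, Set.mem_singleton_iff]; nlinarith [hx.2]))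
      · fun_prop
      · fun_prop
    · intro x hx
      rw [interior_Ico] at hx
      obtain ⟨hx0, hx1⟩ := hx
      have h1 : (0:ℝ) < 1 + x := by linarith
      have h2 : (0:ℝ) < 1 - x := by linarith
      have d1 : HasDerivAt (fun t : ℝ => Real.log (1+t)) (1/(1+x)) x := by
        have := (Real.hasDerivAt_log h1.ne').comp x ((hasDerivAt_id x).const_add 1)
        simpa [Function.comp_def] using this
      have d2 : HasDerivAt (fun t : ℝ => Real.log (1-t)) (-(1/(1-x))) x := by
        have := (Real.hasDerivAt_log h2.ne').comp x ((hasDerivAt_id x).const_sub 1)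
        simpa [Function.comp_def] using this
      have d : HasDerivAt g (1/(1+x) - (-(1/(1-x))) - 2 - 2*(3*x^2)/3) x := by
        exact (((d1.sub d2).sub (by simpa using (hasDerivAt_id x).const_mul 2)).sub
          (by simpa using ((hasDerivAt_pow 3 x).const_mul 2).div_const 3))
      rw [d.deriv]
      have e : 1/(1+x) - (-(1/(1-x))) - 2 - 2*(3*x^2)/3 = 2*x^4/((1+x)*(1-x)) := by
        field_simp; ring
      rw [e]; positivity
  have := key (Set.left_mem_Ico.2 one_pos) ⟨ht0.le, ht1⟩ ht0
  simp only [hg] at this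
  simp at this
  linarith [this]


lemma log_ub {t : ℝ} (ht : t ∈ Set.Ioo (0:ℝ) 1) :
    Real.log (1+t) - Real.log (1-t) < 2*t + 2/3*t^3/(1-t^2) := by
  obtain ⟨ht0, ht1⟩ := ht
  set g : ℝ → ℝ := fun t => 2*t + 2/3*t^3/(1-t^2) - (Real.log (1+t) - Real.log (1-t)) with hg
  have key : StrictMonoOn g (Set.Ico (0:ℝ) 1) := by
    apply strictMonoOn_of_deriv_pos (convex_Ico 0 1)
    · apply ContinuousOn.sub
      · apply ContinuousOn.add (by fun_prop)
        apply ContinuousOn.div (by fun_prop) (by fun_prop)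
        intro x hx; simp only [Set.mem_Ico] at hx; nlinarith [hx.1, hx.2]
      · apply ContinuousOn.sub
        · exact (Real.continuousOn_log.comp (by fun_prop) (by
            intro x hx; simp only [Set.mem_Ico] at hx
            simp only [Set.mem_compl_iff, Set.mem_singleton_iff]; nlinarith [hx.1]))
        · exact (Real.continuousOn_log.comp (by fun_prop) (by
            intro x hx; simp only [Set.mem_Ico] at hx
            simp only [Set.mem_compl_iff, Set.mem_singleton_iff]; nlinarith [hx.2]))
    · intro x hx
      rw [interior_Ico] at hx
      obtain ⟨hx0, hx1⟩ := hx
      have h1 : (0:ℝ) < 1 + x := by linarith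
      have h2 : (0:ℝ) < 1 - x := by linarith
      have h3 : (0:ℝ) < 1 - x^2 := by nlinarith
      have d1 : HasDerivAt (fun t : ℝ => Real.log (1+t)) (1/(1+x)) x := by
        have := (Real.hasDerivAt_log h1.ne').comp x ((hasDerivAt_id x).const_add 1)
        simpa [Function.comp_def] using this
      have d2 : HasDerivAt (fun t : ℝ => Real.log (1-t)) (-(1/(1-x))) x := by
        have := (Real.hasDerivAt_log h2.ne').comp x ((hasDerivAt_id x).const_sub 1)
        simpa [Function.comp_def] using this
      have d3 : HasDerivAt (fun t : ℝ => 2/3*t^3/(1-t^2))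
          ((2/3*(3*x^2)*(1-x^2) - 2/3*x^3*(-(2*x)))/(1-x^2)^2) x := by
        apply HasDerivAt.div
        · simpa using (hasDerivAt_pow 3 x).const_mul (2/3)
        · have : HasDerivAt (fun t : ℝ => 1 - t^2) (-(2*x)) x := by
            simpa using (hasDerivAt_pow 2 x).const_sub 1
          exact this
        · exact h3.ne'
      have d : HasDerivAt g
          (2 + (2/3*(3*x^2)*(1-x^2) - 2/3*x^3*(-(2*x)))/(1-x^2)^2 - (1/(1+x) - (-(1/(1-x))))) x := by
        exact ((by simpa using (hasDerivAt_id x).const_mul 2 : HasDerivAt (fun t:ℝ => 2*t) 2 x).add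
          d3).sub (d1.sub d2)
      rw [d.deriv]
      have e : 2 + (2/3*(3*x^2)*(1-x^2) - 2/3*x^3*(-(2*x)))/(1-x^2)^2 - (1/(1+x) - (-(1/(1-x))))
          = 4/3*x^4/(1-x^2)^2 := by
        have h1' : (1+x) ≠ 0 := h1.ne'
        have h2' : (1-x) ≠ 0 := h2.ne'
        have h3' : (1-x^2) ≠ 0 := h3.ne'
        field_simp
        ring
      rw [e]; positivity
  have := key (Set.left_mem_Ico.2 one_pos) ⟨ht0.le, ht1⟩ ht0
  simp only [hg] at this
  simp at this
  linarith [this]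

-- the central difference bounds
lemma c_bounds {x : ℝ} (hx : 1 ≤ x) :
    1/(12*x+1) - 1/(12*(x+1)+1) < (x + 1/2) * Real.log ((x+1)/x) - 1 ∧
    (x + 1/2) * Real.log ((x+1)/x) - 1 < 1/(12*x) - 1/(12*(x+1)) := by
  have hx0 : (0:ℝ) < x := by linarith
  set t : ℝ := 1/(2*x+1) with htdef
  have h2x : (0:ℝ) < 2*x+1 := by linarith
  have ht0 : 0 < t := by positivity
  have ht1 : t < 1 := by rw [htdef, div_lt_one h2x]; linarith
  have htne : (1 - t^2) > 0 := by nlinarith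
  have hL : Real.log ((x+1)/x) = Real.log (1+t) - Real.log (1-t) := by
    have e1 : (1:ℝ)+t = (2*x+2)/(2*x+1) := by rw [htdef]; field_simp; ring
    have e2 : (1:ℝ)-t = (2*x)/(2*x+1) := by rw [htdef]; field_simp; ring
    rw [e1, e2, Real.log_div (by positivity) (by positivity),
      Real.log_div (by positivity) (by positivity),
      Real.log_div (by positivity) (by positivity)]
    have : Real.log (2*x+2) - Real.log (2*x) = Real.log (x+1) - Real.log x := by
      rw [show 2*x+2 = 2*(x+1) by ring, Real.log_mul (by norm_num) (by positivity),
        Real.log_mul (by norm_num) (by positivity)]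
      ring
    linarith
  have hfac : x + 1/2 = 1/(2*t) := by rw [htdef]; field_simp
  constructor
  · have h := log_lb ⟨ht0, ht1⟩
    have key : (x + 1/2) * Real.log ((x+1)/x) - 1 > t^2/3 := by
      rw [hL, hfac]
      have : 1/(2*t) * (2*t + 2*t^3/3) - 1 = t^2/3 := by field_simp; ring
      calc t^2/3 = 1/(2*t) * (2*t + 2*t^3/3) - 1 := this.symm
        _ < 1/(2*t) * (Real.log (1+t) - Real.log (1-t)) - 1 := by
            have : 0 < 1/(2*t) := by positivity
            nlinarith
    have poly : 1/(12*x+1) - 1/(12*(x+1)+1) < t^2/3 := by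
      have heq : t^2/3 - (1/(12*x+1) - 1/(12*(x+1)+1))
          = (24*x-23)/(3*(2*x+1)^2*((12*x+1)*(12*(x+1)+1))) := by
        rw [htdef]; field_simp; ring
      have hpos : 0 < (24*x-23)/(3*(2*x+1)^2*((12*x+1)*(12*(x+1)+1))) := by
        apply _root_.div_pos (by linarith) (by positivity)
      linarith
    linarith
  · have h := log_ub ⟨ht0, ht1⟩
    have key : (x + 1/2) * Real.log ((x+1)/x) - 1 < t^2/(3*(1-t^2)) := by
      rw [hL, hfac]
      have e : 1/(2*t) * (2*t + 2/3*t^3/(1-t^2)) - 1 = t^2/(3*(1-t^2)) := by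
        field_simp; ring
      calc 1/(2*t) * (Real.log (1+t) - Real.log (1-t)) - 1
          < 1/(2*t) * (2*t + 2/3*t^3/(1-t^2)) - 1 := by
            have : 0 < 1/(2*t) := by positivity
            nlinarith
        _ = t^2/(3*(1-t^2)) := e
    have e2 : t^2/(3*(1-t^2)) = 1/(12*x) - 1/(12*(x+1)) := by
      rw [htdef]
      have : (1:ℝ) - (1/(2*x+1))^2 = (4*x^2+4*x)/(2*x+1)^2 := by field_simp; ring
      rw [this]
      field_simp
      ring
    linarith [key, e2]


noncomputable def Brob (n : ℕ) : ℝ :=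
  Real.log n.factorial - ((n:ℝ) + 1/2) * Real.log n + n - Real.log (Real.sqrt (2*Real.pi))

lemma Brob_diff {n : ℕ} (hn : 1 ≤ n) :
    Brob n - Brob (n+1) = ((n:ℝ) + 1/2) * Real.log (((n:ℝ)+1)/n) - 1 := by
  have hx : (1:ℝ) ≤ (n:ℝ) := by exact_mod_cast hn
  have hx0 : (0:ℝ) < n := by linarith
  have hfac : ((n+1).factorial : ℝ) = ((n:ℝ)+1) * n.factorial := by
    rw [Nat.factorial_succ]; push_cast; ring
  simp only [Brob, hfac]
  rw [Real.log_mul (by positivity) (by positivity),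
    Real.log_div (by positivity) hx0.ne']
  push_cast
  ring

lemma Brob_tendsto : Tendsto Brob atTop (𝓝 0) := by
  have hpi : (0:ℝ) < Real.sqrt Real.pi := Real.sqrt_pos.2 Real.pi_pos
  have h1 : Tendsto (fun n => Real.log (Stirling.stirlingSeq n) - Real.log (Real.sqrt Real.pi))
      atTop (𝓝 0) := by
    have := ((Real.continuousAt_log hpi.ne').tendsto.comp
      Stirling.tendsto_stirlingSeq_sqrt_pi).sub_const (Real.log (Real.sqrt Real.pi))
    simpa using this
  apply h1.congr'
  filter_upwards [eventually_ge_atTop 1] with n hn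
  have hx : (1:ℝ) ≤ (n:ℝ) := by exact_mod_cast hn
  have hx0 : (0:ℝ) < n := by linarith
  rw [Stirling.log_stirlingSeq_formula]
  have e1 : Real.log (2*(n:ℝ)) = Real.log 2 + Real.log n :=
    Real.log_mul (by norm_num) hx0.ne'
  have e2 : Real.log ((n:ℝ)/Real.exp 1) = Real.log n - 1 := by
    rw [Real.log_div hx0.ne' (Real.exp_ne_zero 1), Real.log_exp]
  have e3 : Real.log (Real.sqrt (2*Real.pi)) = 1/2 * Real.log 2 + Real.log (Real.sqrt Real.pi) := by
    rw [Real.log_sqrt (by positivity), Real.log_mul (by norm_num) Real.pi_pos.ne',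
      Real.log_sqrt Real.pi_pos.le]
    ring
  simp only [Brob, e1, e2, e3]
  ring

lemma Brob_bounds {n : ℕ} (hn : 1 ≤ n) :
    1/(12*(n:ℝ)+1) < Brob n ∧ Brob n < 1/(12*(n:ℝ)) := by
  -- the two diff bounds, in ℕ form
  have hdlo : ∀ m : ℕ, 1 ≤ m →
      1/(12*(m:ℝ)+1) - 1/(12*((m:ℝ)+1)+1) < Brob m - Brob (m+1) := by
    intro m hm
    have hx : (1:ℝ) ≤ (m:ℝ) := by exact_mod_cast hm
    rw [Brob_diff hm]
    exact (c_bounds hx).1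
  have hdhi : ∀ m : ℕ, 1 ≤ m →
      Brob m - Brob (m+1) < 1/(12*(m:ℝ)) - 1/(12*((m:ℝ)+1)) := by
    intro m hm
    have hx : (1:ℝ) ≤ (m:ℝ) := by exact_mod_cast hm
    rw [Brob_diff hm]
    exact (c_bounds hx).2
  -- D and E
  set D : ℕ → ℝ := fun m => Brob m - 1/(12*(m:ℝ)+1) with hD
  set E : ℕ → ℝ := fun m => Brob m - 1/(12*(m:ℝ)) with hE
  have hDstep : ∀ m : ℕ, 1 ≤ m → D (m+1) < D m := by
    intro m hm
    have := hdlo m hm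
    simp only [hD]
    push_cast
    linarith
  have hEstep : ∀ m : ℕ, 1 ≤ m → E m < E (m+1) := by
    intro m hm
    have := hdhi m hm
    simp only [hE]
    push_cast
    linarith
  have hbase : Tendsto (fun m : ℕ => 12*(m:ℝ)+1) atTop atTop :=
    tendsto_atTop_add_const_right _ 1
      ((tendsto_natCast_atTop_atTop (R := ℝ)).const_mul_atTop (by norm_num))
  have hbase' : Tendsto (fun m : ℕ => 12*(m:ℝ)) atTop atTop :=
    (tendsto_natCast_atTop_atTop (R := ℝ)).const_mul_atTop (by norm_num)
  have hinv : Tendsto (fun m : ℕ => 1/(12*(m:ℝ)+1)) atTop (𝓝 0) :=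
    hbase.inv_tendsto_atTop.congr (fun m => by simp [one_div])
  have hinv' : Tendsto (fun m : ℕ => 1/(12*(m:ℝ))) atTop (𝓝 0) :=
    hbase'.inv_tendsto_atTop.congr (fun m => by simp [one_div])
  have hDt : Tendsto D atTop (𝓝 0) := by
    have h := Brob_tendsto.sub hinv
    rw [sub_zero] at h
    exact h
  have hEt : Tendsto E atTop (𝓝 0) := by
    have h := Brob_tendsto.sub hinv'
    rw [sub_zero] at h
    exact h
  -- D is eventually below D k for any k ≥ 1
  have hDanti : ∀ k : ℕ, 1 ≤ k → ∀ m : ℕ, k ≤ m → D m ≤ D k := by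
    intro k hk m hm
    induction m with
    | zero => omega
    | succ p ih =>
      rcases Nat.lt_or_ge k (p+1) with h | h
      · have hp : k ≤ p := by omega
        have hp1 : 1 ≤ p := le_trans hk hp
        exact le_trans (hDstep p hp1).le (ih hp)
      · have : k = p + 1 := le_antisymm hm h
        rw [this]
  have hEanti : ∀ k : ℕ, 1 ≤ k → ∀ m : ℕ, k ≤ m → E k ≤ E m := by
    intro k hk m hm
    induction m with
    | zero => omega
    | succ p ih =>
      rcases Nat.lt_or_ge k (p+1) with h | h
      · have hp : k ≤ p := by omega
        have hp1 : 1 ≤ p := le_trans hk hp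
        exact le_trans (ih hp) (hEstep p hp1).le
      · have : k = p + 1 := le_antisymm hm h
        rw [this]
  have hDnn : ∀ k : ℕ, 1 ≤ k → 0 ≤ D k := by
    intro k hk
    refine le_of_tendsto hDt ?_
    filter_upwards [eventually_ge_atTop k] with m hm
    exact hDanti k hk m hm
  have hEnp : ∀ k : ℕ, 1 ≤ k → E k ≤ 0 := by
    intro k hk
    refine ge_of_tendsto hEt ?_
    filter_upwards [eventually_ge_atTop k] with m hm
    exact hEanti k hk m hm
  constructor
  · have h1 : 0 ≤ D (n+1) := hDnn (n+1) (by omega)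
    have h2 : D (n+1) < D n := hDstep n hn
    have : 0 < D n := lt_of_le_of_lt h1 h2
    simp only [hD] at this
    linarith
  · have h1 : E (n+1) ≤ 0 := hEnp (n+1) (by omega)
    have h2 : E n < E (n+1) := hEstep n hn
    have : E n < 0 := lt_of_lt_of_le h2 h1
    simp only [hE] at this
    linarith

theorem robbins_stirling (n : ℕ) (hn : 1 ≤ n) :
    Real.sqrt (2 * Real.pi) * (n : ℝ) ^ ((n : ℝ) + 1 / 2) * Real.exp (-(n : ℝ)) *
        Real.exp (1 / (12 * (n : ℝ) + 1)) < (n.factorial : ℝ) ∧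
    (n.factorial : ℝ) < Real.sqrt (2 * Real.pi) * (n : ℝ) ^ ((n : ℝ) + 1 / 2) *
        Real.exp (-(n : ℝ)) * Real.exp (1 / (12 * (n : ℝ))) := by
  have hx0 : (0:ℝ) < n := by exact_mod_cast hn
  have hsq : (0:ℝ) < Real.sqrt (2*Real.pi) := Real.sqrt_pos.2 (by positivity)
  have hfa : (0:ℝ) < n.factorial := by exact_mod_cast n.factorial_pos
  have hrw : ∀ y : ℝ, Real.sqrt (2 * Real.pi) * (n : ℝ) ^ ((n : ℝ) + 1 / 2) *
      Real.exp (-(n : ℝ)) * Real.exp y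
      = Real.exp (Real.log (Real.sqrt (2*Real.pi)) + ((n:ℝ)+1/2) * Real.log n + (-(n:ℝ)) + y) := by
    intro y
    have hs : Real.sqrt (2*Real.pi) = Real.exp (Real.log (Real.sqrt (2*Real.pi))) :=
      (Real.exp_log hsq).symm
    conv_lhs => rw [hs]
    rw [Real.rpow_def_of_pos hx0, ← Real.exp_add, ← Real.exp_add, ← Real.exp_add]
    congr 1
    ring
  have hfrw : (n.factorial : ℝ) = Real.exp (Real.log n.factorial) := (Real.exp_log hfa).symm
  obtain ⟨hb1, hb2⟩ := Brob_bounds hn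
  simp only [Brob] at hb1 hb2
  constructor
  · rw [hrw, hfrw, Real.exp_lt_exp]
    linarith
  · rw [hrw, hfrw, Real.exp_lt_exp]
    linarith
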